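/- In the clock-gadget setting with clock dimension n ≥ 2, the following two identities hold: P₀ W₀ P₁ W₁ P₁ ⋯ P₁ W_{n−1} P₀ = (Γ₀ M₀ M₁ ⋯ M_{n−1} Γ₀) ⊗ |0⟩⟨0|, and P₀ W_{n−1}† P₁ W_{n−2}† P₁ ⋯ P₁ W₀† P₀ = (Γ₀ M_{n−1}† ⋯ M₁† M₀† Γ₀) ⊗ |0⟩⟨0|. (These are the operators Θ_n^{↓} and Θ_n^{↑}.) -/

import Mathlib

open Matrix Kronecker BigOperators

noncomputable section

variable {S : Type*} [Fintype S] [DecidableEq S]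

/-- The ground-space projection `P₀ = Γ₀ ⊗ |0⟩⟨0|` on `H_S ⊗ ℂⁿ`. -/
def P0 (n : ℕ) [NeZero n] (Γ₀ : Matrix S S ℂ) : Matrix (S × Fin n) (S × Fin n) ℂ :=
  Γ₀ ⊗ₖ Matrix.single 0 0 1

/-- The hopping operator `Wᵢ = Mᵢ ⊗ |i⟩⟨i+1|` (clock indices taken mod `n`). -/
def Wop {n : ℕ} [NeZero n] (M : Fin n → Matrix S S ℂ) (i : Fin n) :
    Matrix (S × Fin n) (S × Fin n) ℂ :=
  M i ⊗ₖ Matrix.single i (i + 1) 1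

section

open Fin.NatCast Fin.CommRing

lemma intersperse_prod_eq {G : Type*} [Monoid G] (p : G) :
    ∀ (x : G) (l : List G), (∀ y ∈ l, p * y = y) →
      (List.intersperse p (x :: l)).prod = (x :: l).prod
  | x, [], _ => rfl
  | x, y :: rest, h => by
    have ih := intersperse_prod_eq p y rest (fun z hz => h z (List.mem_cons_of_mem _ hz))
    rw [List.intersperse_cons_cons, List.prod_cons, List.prod_cons, ih, List.prod_cons,
      ← mul_assoc p y, h y List.mem_cons_self, List.prod_cons, List.prod_cons]

lemma kron_std_mul {n : ℕ} [NeZero n] (A B : Matrix S S ℂ) (i j k : Fin n) :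
    (A ⊗ₖ Matrix.single i j 1) * (B ⊗ₖ Matrix.single j k 1)
      = (A * B) ⊗ₖ Matrix.single i k 1 := by
  rw [← Matrix.mul_kronecker_mul, Matrix.single_mul_single_same, one_mul]

lemma kron_std_mul_ne {n : ℕ} [NeZero n] (A B : Matrix S S ℂ) (i j k l : Fin n)
    (h : j ≠ k) :
    (A ⊗ₖ Matrix.single i j 1) * (B ⊗ₖ Matrix.single k l 1) = 0 := by
  rw [← Matrix.mul_kronecker_mul, Matrix.single_mul_single_of_ne (h := h),
    Matrix.kronecker_zero]

lemma kron_std_conjTranspose {n : ℕ} [NeZero n] (A : Matrix S S ℂ) (i j : Fin n) :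
    (A ⊗ₖ Matrix.single i j 1)ᴴ = Aᴴ ⊗ₖ Matrix.single j i 1 := by
  ext ⟨a, b⟩ ⟨c, d⟩
  simp only [Matrix.conjTranspose_apply, Matrix.kroneckerMap_apply, Matrix.single,
    Matrix.of_apply, star_mul', RCLike.star_def]
  by_cases h1 : j = b <;> by_cases h2 : i = d <;> simp [h1, h2, and_comm]

lemma chain'_finRange (n : ℕ) [NeZero n] :
    List.Chain' (fun p q : Fin n => q = p + 1) (List.finRange n) := by
  rw [List.Chain', List.isChain_iff_getElem]
  intro i h
  rw [List.length_finRange] at h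
  rw [List.getElem_finRange, List.getElem_finRange]
  ext
  simp only [Fin.val_cast, Fin.val_add, Fin.val_one', Nat.mod_eq_of_lt (show 1 < n by omega),
    Nat.mod_eq_of_lt (show i + 1 < n by omega)]

lemma aux_down {n : ℕ} [NeZero n] (M : Fin n → Matrix S S ℂ) :
    ∀ (l : List (Fin n)) (a : Fin n), List.Chain (fun p q : Fin n => q = p + 1) a l →
      ((a :: l).map (Wop M)).prod
        = ((a :: l).map M).prod ⊗ₖ
            Matrix.single a (a + (((a :: l).length : ℕ) : Fin n)) 1
  | [], a, _ => by
    simp [Wop, Nat.cast_one]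
  | b :: rest, a, h => by
    obtain ⟨hab, hrest⟩ := List.isChain_cons_cons.mp h
    subst hab
    rw [List.map_cons, List.prod_cons, aux_down M rest _ hrest, Wop, kron_std_mul]
    have hidx : a + 1 + ((((a + 1) :: rest).length : ℕ) : Fin n)
        = a + (((a :: (a + 1) :: rest).length : ℕ) : Fin n) := by
      simp only [List.length_cons]
      push_cast
      ring
    rw [hidx]
    simp only [List.map_cons, List.prod_cons]

lemma aux_up {n : ℕ} [NeZero n] (M : Fin n → Matrix S S ℂ) :
    ∀ (l : List (Fin n)) (a : Fin n), List.Chain (fun p q : Fin n => p = q + 1) a l →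
      ((a :: l).map (fun i => (Wop M i)ᴴ)).prod
        = ((a :: l).map (fun i => (M i)ᴴ)).prod ⊗ₖ
            Matrix.single (a + 1) (a + 1 - (((a :: l).length : ℕ) : Fin n)) 1
  | [], a, _ => by
    simp only [List.map_cons, List.map_nil, List.prod_cons, List.prod_nil, mul_one,
      List.length_cons, List.length_nil, zero_add, Nat.cast_one, Wop, kron_std_conjTranspose]
    have h : a + 1 - (1 : Fin n) = a := by ring
    rw [h]
  | b :: rest, a, h => by
    obtain ⟨hab, hrest⟩ := List.isChain_cons_cons.mp h
    subst hab
    rw [List.map_cons, List.prod_cons, aux_up M rest _ hrest, Wop, kron_std_conjTranspose,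
      kron_std_mul]
    have hidx : b + 1 - (((b :: rest).length : ℕ) : Fin n)
        = (b + 1) + 1 - ((((b + 1) :: b :: rest).length : ℕ) : Fin n) := by
      simp only [List.length_cons]
      push_cast
      ring
    rw [hidx]
    simp only [List.map_cons, List.prod_cons]

end

open Fin.NatCast in
/-- In the clock-gadget setting,
`P₀ W₀ P₁ W₁ P₁ ⋯ P₁ W_{n-1} P₀ = (Γ₀ M₀ M₁ ⋯ M_{n-1} Γ₀) ⊗ |0⟩⟨0|` and
`P₀ W_{n-1}† P₁ ⋯ P₁ W₀† P₀ = (Γ₀ M_{n-1}† ⋯ M₁† M₀† Γ₀) ⊗ |0⟩⟨0|`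
(these are the operators `Θₙ↓` and `Θₙ↑`). -/
theorem statement13 (n : ℕ) [NeZero n] (hn : 2 ≤ n)
    (Γ₀ : Matrix S S ℂ) (hΓproj : Γ₀ * Γ₀ = Γ₀) (hΓsa : Γ₀ᴴ = Γ₀)
    (M : Fin n → Matrix S S ℂ) :
    P0 n Γ₀ *
        (List.intersperse (1 - P0 n Γ₀) ((List.finRange n).map (Wop M))).prod *
        P0 n Γ₀
      = (Γ₀ * ((List.finRange n).map M).prod * Γ₀) ⊗ₖ Matrix.single 0 0 1 ∧
    P0 n Γ₀ *
        (List.intersperse (1 - P0 n Γ₀)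
          (((List.finRange n).reverse).map (fun i => (Wop M i)ᴴ))).prod *
        P0 n Γ₀
      = (Γ₀ * (((List.finRange n).reverse).map (fun i => (M i)ᴴ)).prod * Γ₀) ⊗ₖ
          Matrix.single 0 0 1 := by
  have hnpos : 0 < n := by omega
  have hnnil : List.finRange n ≠ [] := by
    intro h
    have := congrArg List.length h
    simp at this
    omega
  have hchain : List.Chain' (fun p q : Fin n => q = p + 1) (List.finRange n) :=
    chain'_finRange n
  constructor
  · -- forward direction
    obtain ⟨m, rfl⟩ : ∃ m, n = m + 1 := ⟨n - 1, by omega⟩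
    rw [List.finRange_succ] at hchain ⊢
    set t : List (Fin (m + 1)) := (List.finRange m).map Fin.succ with ht
    have hch : List.Chain (fun p q : Fin (m + 1) => q = p + 1) 0 t := hchain
    rw [List.map_cons]
    rw [intersperse_prod_eq]
    · rw [← List.map_cons, aux_down M t 0 hch]
      have hlen : (((((0 : Fin (m+1)) :: t).length : ℕ)) : Fin (m + 1)) = 0 := by
        simp only [List.length_cons, ht, List.length_map, List.length_finRange]
        exact Fin.natCast_self (m + 1)
      rw [hlen, add_zero, P0, kron_std_mul, kron_std_mul]
    · intro y hy
      rw [List.mem_map] at hy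
      obtain ⟨i, hi, rfl⟩ := hy
      rw [ht, List.mem_map] at hi
      obtain ⟨i', _, rfl⟩ := hi
      rw [sub_mul, one_mul, P0, Wop, kron_std_mul_ne _ _ _ _ _ _ (Fin.succ_ne_zero i').symm,
        sub_zero]
  · -- reverse direction
    have hnnil' : (List.finRange n).reverse ≠ [] := by simpa using hnnil
    obtain ⟨a, T, hL⟩ : ∃ a T, (List.finRange n).reverse = a :: T :=
      ⟨_, _, (List.cons_head_tail hnnil').symm⟩
    have ha : a = ⟨n - 1, by omega⟩ := by
      have h0 : (List.finRange n).reverse[0]'(by rw [hL]; simp) = a := by simp [hL]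
      rw [List.getElem_reverse] at h0
      rw [← h0]
      simp [List.finRange]
    have ha1 : a + 1 = 0 := by
      rw [ha]
      ext
      rw [Fin.val_add, Fin.val_one', Nat.mod_eq_of_lt (show 1 < n by omega)]
      simp only [Fin.val_zero]
      rw [show n - 1 + 1 = n by omega, Nat.mod_self]
    have hchain' : List.Chain' (fun p q : Fin n => p = q + 1) ((List.finRange n).reverse) := by
      rw [List.Chain', List.isChain_reverse]
      exact hchain
    have hch : List.Chain (fun p q : Fin n => p = q + 1) a T := by
      rw [hL] at hchain'
      exact hchain'
    have hnodup : ((List.finRange n).reverse).Nodup :=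
      (List.nodup_reverse).mpr (List.nodup_finRange n)
    have hmem : ∀ x ∈ T, x ≠ a := by
      intro x hx
      rw [hL, List.nodup_cons] at hnodup
      intro hxa
      exact hnodup.1 (hxa ▸ hx)
    have haux := aux_up M T a hch
    simp only [List.map_cons] at haux
    have hlen : ((((a :: T).length : ℕ)) : Fin n) = 0 := by
      rw [← hL]
      simp only [List.length_reverse, List.length_finRange]
      exact Fin.natCast_self n
    rw [List.length_cons] at haux hlen
    rw [hL, List.map_cons]
    rw [intersperse_prod_eq]
    · rw [haux, hlen, sub_zero, ha1, P0, kron_std_mul, kron_std_mul]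
      simp only [List.map_cons, List.prod_cons]
    · intro y hy
      rw [List.mem_map] at hy
      obtain ⟨i, hi, rfl⟩ := hy
      have hi1 : (0 : Fin n) ≠ i + 1 := by
        intro h
        have : i = a := add_right_cancel (h.symm.trans ha1.symm)
        exact hmem i hi this
      rw [sub_mul, one_mul, P0, Wop, kron_std_conjTranspose,
        kron_std_mul_ne _ _ _ _ _ _ hi1, sub_zero]
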